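/- Let A be a unital complex C*-algebra, β a *-endomorphism of A, H and L complex Hilbert spaces, π : A → B(H) a unital *-homomorphism, V ∈ B(H) with V*V = I and Vπ(a) = π(β(a))V for all a ∈ A, and T : L → H a bounded operator with T*T = I_L and TT* = π(β(1)) − VV*. Then the map φ : A → B(L) defined by φ(a) = T*π(β(a))T is a unital *-homomorphism: φ(1) = I_L, φ(ab) = φ(a)φ(b) for all a, b ∈ A, and φ(a*) = φ(a)* for all a ∈ A. -/

import Mathlib

open ContinuousLinearMap

/-- In the dilation construction, the compression `φ(a) = T* π(β(a)) T` to the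
defect space is a unital *-homomorphism. -/
theorem stmt_8 {A : Type*} [CStarAlgebra A]
    (β : A →⋆ₙₐ[ℂ] A)
    {H L : Type*}
    [NormedAddCommGroup H] [InnerProductSpace ℂ H] [CompleteSpace H]
    [NormedAddCommGroup L] [InnerProductSpace ℂ L] [CompleteSpace L]
    (π : A →⋆ₐ[ℂ] (H →L[ℂ] H))
    (V : H →L[ℂ] H) (hiso : star V * V = 1)
    (hcov : ∀ a : A, V * π a = π (β a) * V)
    (T : L →L[ℂ] H)
    (hT1 : adjoint T ∘L T = 1)
    (hT2 : T ∘L adjoint T = π (β 1) - V * star V) :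
    (adjoint T ∘L (π (β 1) ∘L T) = 1) ∧
      (∀ a b : A, adjoint T ∘L (π (β (a * b)) ∘L T) =
        (adjoint T ∘L (π (β a) ∘L T)) * (adjoint T ∘L (π (β b) ∘L T))) ∧
      (∀ a : A, adjoint T ∘L (π (β (star a)) ∘L T) =
        star (adjoint T ∘L (π (β a) ∘L T))) := by
  set p : H →L[ℂ] H := π (β 1) with hp
  have hp_self : star p = p := by
    rw [hp, ← map_star, ← map_star, star_one]
  have hpV : p * V = V := by
    have h := hcov 1
    rw [map_one, mul_one] at h
    exact h.symm
  have hVp : star V * p = star V := by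
    have := congrArg star hpV
    rw [star_mul, hp_self] at this
    exact this
  have hpp : p * p = p := by
    rw [hp, ← map_mul, ← map_mul, one_mul]
  have hcov_star : ∀ a : A, star V * π (β a) = π a * star V := by
    intro a
    have h := congrArg star (hcov (star a))
    simp only [star_mul, ← map_star, star_star] at h
    exact h.symm
  have hVT : star V ∘L T = 0 := by
    have h1 : star V ∘L (T ∘L adjoint T) = 0 := by
      rw [hT2]
      have : star V ∘L (p - V * star V) = star V * p - star V * V * star V := by
        rw [comp_sub]; rfl
      rw [this, hVp, hiso, one_mul, sub_self]
    calc star V ∘L T = star V ∘L (T ∘L (adjoint T ∘L T)) := by rw [hT1]; rfl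
    _ = (star V ∘L (T ∘L adjoint T)) ∘L T := by rw [comp_assoc, comp_assoc]
    _ = 0 := by rw [h1, zero_comp]
  have hTT : p ∘L (T ∘L adjoint T) = T ∘L adjoint T := by
    rw [hT2]
    have : p ∘L (p - V * star V) = p * p - p * V * star V := by
      rw [comp_sub]; rfl
    rw [this, hpp, hpV]
  have hpT : p ∘L T = T := by
    calc p ∘L T = p ∘L ((T ∘L adjoint T) ∘L T) := by
          rw [comp_assoc, hT1]; rfl
    _ = (p ∘L (T ∘L adjoint T)) ∘L T := by rw [← comp_assoc]
    _ = (T ∘L adjoint T) ∘L T := by rw [hTT]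
    _ = T := by rw [comp_assoc, hT1]; rfl
  have hkey : ∀ a : A, (T ∘L adjoint T) ∘L (π (β a) ∘L T) = π (β a) ∘L T := by
    intro a
    rw [hT2, sub_comp]
    have h1 : p ∘L (π (β a) ∘L T) = π (β a) ∘L T := by
      rw [← comp_assoc]
      congr 1
      show p * π (β a) = π (β a)
      rw [hp, ← map_mul, ← map_mul, one_mul]
    have h2 : (V * star V) ∘L (π (β a) ∘L T) = 0 := by
      show V ∘L (star V ∘L (π (β a) ∘L T)) = 0
      rw [← comp_assoc (star V)]
      have : star V ∘L π (β a) = π a ∘L star V := hcov_star a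
      rw [this, comp_assoc, hVT, comp_zero, comp_zero]
    rw [h1, h2, sub_zero]
  refine ⟨by rw [hpT, hT1], ?_, ?_⟩
  · intro a b
    have hkey' : ∀ x : L, T (adjoint T (π (β b) (T x))) = π (β b) (T x) := by
      intro x
      have := ContinuousLinearMap.ext_iff.mp (hkey b) x
      simpa using this
    ext x
    simp only [map_mul, ContinuousLinearMap.mul_def, comp_apply]
    rw [hkey' x]
  · intro a
    rw [star_eq_adjoint, adjoint_comp, adjoint_comp, adjoint_adjoint,
      ← star_eq_adjoint (π (β a)), ← map_star π, ← map_star β, comp_assoc]
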